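/- Let p, n be positive integers with 2n < p. Let R = ℂ[x_{k,i} : 1 ≤ k ≤ p, 1 ≤ i ≤ n] be the polynomial ring corresponding to the entries of a matrix A ∈ M_{p,n}(ℂ), and let S ⊆ R be the ℂ-subalgebra generated by the quadratic invariants q_{i,j} = ∑_{k=1}^p x_{k,i} x_{k,j} for 1 ≤ i ≤ j ≤ n. Then R is a free module over S. (This realizes the separation of variables ℂ[W⁺] ≅ H(K_C⁺) ⊗ ℂ[W⁺]^{K_C⁺} into harmonics times invariants; in particular R is flat over S, i.e. the moment map ψ⁺(A) = AᵀA is flat.) -/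

import Mathlib

open MvPolynomial

/-- The subalgebra of `ℂ[x_{k,i}] = ℂ[M_{p,n}(ℂ)]` generated by the quadratic
invariants `q_{i,j} = ∑_k x_{k,i} x_{k,j}` for `i ≤ j` (the `O(p,ℂ)`-invariants). -/
noncomputable def quadInvariantsO (p n : ℕ) :
    Subalgebra ℂ (MvPolynomial (Fin p × Fin n) ℂ) :=
  Algebra.adjoin ℂ
    {f | ∃ i j : Fin n, i ≤ j ∧ f = ∑ k : Fin p, X (k, i) * X (k, j)}

noncomputable section

namespace SepVar

open Finsupp Submodule Finset

variable {p n : ℕ}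

abbrev Vars (p n : ℕ) := Fin p × Fin n
abbrev Exp (p n : ℕ) := Vars p n →₀ ℕ
abbrev Poly (p n : ℕ) := MvPolynomial (Vars p n) ℂ
abbrev Pairs (n : ℕ) := {ij : Fin n × Fin n // ij.1 ≤ ij.2}

/-- The quadratic invariant. -/
def q (p : ℕ) {n : ℕ} (i j : Fin n) : Poly p n := ∑ k : Fin p, X (k, i) * X (k, j)

/-- the distinguished row for the pair `(i,j)`. -/
def row (h : 2 * n < p) (i j : Fin n) : Fin p :=
  ⟨(i : ℕ) + j, by have := i.2; have := j.2; omega⟩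

/-- exponent of the monomial `x_{k,i} x_{k,j}`. -/
def mu (k : Fin p) (i j : Fin n) : Exp p n :=
  Finsupp.single (k, i) 1 + Finsupp.single (k, j) 1

/-- the leading exponent of `q i j`. -/
def lt (h : 2 * n < p) (t : Pairs n) : Exp p n := mu (row h t.1.1 t.1.2) t.1.1 t.1.2

/-- weight of a variable. -/
def cwt (s : Vars p n) : ℕ := (p * p - (s.1 : ℕ) * (s.1 : ℕ)) + 4 * s.1 * s.2

/-- weight of an exponent. -/
def wt (e : Exp p n) : ℕ := Finsupp.weight cwt e

/-- standard (harmonic-side) exponents. -/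
def Std (h : 2 * n < p) (e : Exp p n) : Prop := ∀ t : Pairs n, ¬ lt h t ≤ e

/-- product of invariants with multiplicities. -/
def Qpow (p : ℕ) {n : ℕ} (a : Pairs n → ℕ) : Poly p n :=
  ∏ t : Pairs n, q p t.1.1 t.1.2 ^ a t

/-- exponent of the product of leading monomials. -/
def Lexp (h : 2 * n < p) (a : Pairs n → ℕ) : Exp p n := ∑ t : Pairs n, a t • lt h t

def asum {n : ℕ} (a : Pairs n → ℕ) : ℕ := ∑ t : Pairs n, a t

variable (h : 2 * n < p)

/-- index type for the candidate `ℂ`-basis. -/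
def Idx (h : 2 * n < p) := (Pairs n → ℕ) × {e : Exp p n // Std h e}

def vI (x : Idx h) : Poly p n := Qpow p x.1 * monomial x.2.1 1

def degIdx (x : Idx h) : ℕ := 2 * asum x.1 + Finsupp.degree x.2.1

def ΦI (x : Idx h) : Exp p n := Lexp h x.1 + x.2.1


section Lemmas

lemma wt_add (e f : Exp p n) : wt (e + f) = wt e + wt f := map_add (Finsupp.weight cwt) e f

lemma wt_single (s : Vars p n) (m : ℕ) : wt (Finsupp.single s m) = m * cwt s := by
  unfold wt
  rw [Finsupp.weight_apply, Finsupp.sum_single_index] <;> simp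

lemma deg_add (e f : Exp p n) : Finsupp.degree (e + f) = Finsupp.degree e + Finsupp.degree f := by
  simp only [Finsupp.degree_eq_weight_one]; exact map_add _ e f

lemma deg_single (s : Vars p n) (m : ℕ) : Finsupp.degree (Finsupp.single s m) = m := by
  simp only [Finsupp.degree_eq_weight_one]
  rw [Finsupp.weight_apply, Finsupp.sum_single_index] <;> simp

lemma cwt_key (i j : Fin n) (k k₀ : Fin p) (hk0 : (k₀ : ℕ) = (i : ℕ) + (j : ℕ))
    (hk : k ≠ k₀) :
    cwt (k, i) + cwt (k, j) < cwt (k₀, i) + cwt (k₀, j) := by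
  have h1 : (k : ℕ) * k ≤ p * p := Nat.mul_le_mul k.2.le k.2.le
  have h2 : (k₀ : ℕ) * k₀ ≤ p * p := Nat.mul_le_mul k₀.2.le k₀.2.le
  have hkk : (k : ℕ) ≠ (k₀ : ℕ) := fun hc => hk (Fin.ext hc)
  simp only [cwt]
  zify [h1, h2]
  have hne : (k : ℤ) - (k₀ : ℤ) ≠ 0 := by
    intro hc
    exact hkk (by exact_mod_cast sub_eq_zero.mp hc)
  have hpos : ((k : ℤ) - (k₀ : ℤ)) ^ 2 > 0 := by positivity
  have hk0' : (k₀ : ℤ) = (i : ℤ) + (j : ℤ) := by exact_mod_cast hk0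
  nlinarith [hpos]

lemma deg_mu (k : Fin p) (i j : Fin n) : Finsupp.degree (mu k i j) = 2 := by
  rw [mu, deg_add, deg_single, deg_single]

lemma wt_mu (k : Fin p) (i j : Fin n) : wt (mu k i j) = cwt (k, i) + cwt (k, j) := by
  rw [mu, wt_add, wt_single, wt_single, one_mul, one_mul]

lemma wt_mu_lt (h : 2 * n < p) {i j : Fin n} {k : Fin p} (hk : k ≠ row h i j) :
    wt (mu k i j) < wt (mu (row h i j) i j) := by
  rw [wt_mu, wt_mu]
  exact cwt_key i j k (row h i j) rfl hk

lemma slot_cases (h : 2 * n < p) (t : Pairs n) (s : Vars p n) (hs : lt h t s ≠ 0) :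
    s = (row h t.1.1 t.1.2, t.1.1) ∨ s = (row h t.1.1 t.1.2, t.1.2) := by
  by_contra hc
  push_neg at hc
  apply hs
  simp only [lt, mu, Finsupp.add_apply, Finsupp.single_apply]
  rw [if_neg (fun hh => hc.1 hh.symm), if_neg (fun hh => hc.2 hh.symm), add_zero]

lemma slot_unique (h : 2 * n < p) (t t' : Pairs n) (s : Vars p n)
    (hs : lt h t s ≠ 0) (hs' : lt h t' s ≠ 0) : t = t' := by
  obtain ⟨⟨i, j⟩, hij⟩ := t
  obtain ⟨⟨i', j'⟩, hij'⟩ := t'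
  have hij2 : (i : ℕ) ≤ (j : ℕ) := hij
  have hij2' : (i' : ℕ) ≤ (j' : ℕ) := hij'
  have c1 := slot_cases h _ s hs
  have c2 := slot_cases h _ s hs'
  simp only at c1 c2
  apply Subtype.ext
  simp only [Prod.mk.injEq, Fin.ext_iff]
  rcases c1 with rfl | rfl <;> rcases c2 with hc | hc <;>
    · simp only [Prod.mk.injEq, Fin.ext_iff, row] at hc
      omega

lemma lt_apply_1 (h : 2 * n < p) (i j : Fin n) (hij : i ≤ j) :
    lt h ⟨(i, j), hij⟩ (row h i j, i) = if i = j then 2 else 1 := by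
  by_cases hij' : i = j
  · subst hij'; simp [lt, mu, Finsupp.add_apply, Finsupp.single_apply]
  · have hne : ((row h i j, j) : Vars p n) ≠ (row h i j, i) :=
      fun hc => hij' (congrArg Prod.snd hc).symm
    simp only [lt, mu, Finsupp.add_apply, Finsupp.single_apply]
    simp [hne, hij']

lemma lt_apply_2 (h : 2 * n < p) (i j : Fin n) (hij : i ≤ j) :
    lt h ⟨(i, j), hij⟩ (row h i j, j) = if i = j then 2 else 1 := by
  by_cases hij' : i = j
  · subst hij'; simp [lt, mu, Finsupp.add_apply, Finsupp.single_apply]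
  · have hne : ((row h i j, i) : Vars p n) ≠ (row h i j, j) :=
      fun hc => hij' (congrArg Prod.snd hc)
    simp only [lt, mu, Finsupp.add_apply, Finsupp.single_apply]
    simp [hne, hij']


lemma Lexp_apply (h : 2 * n < p) (a : Pairs n → ℕ) (s : Vars p n) :
    Lexp h a s = ∑ t : Pairs n, a t * lt h t s := by
  rw [Lexp, Finsupp.finset_sum_apply]
  exact Finset.sum_congr rfl fun t _ => by rw [Finsupp.smul_apply, smul_eq_mul]

lemma Lexp_apply_of_ne (h : 2 * n < p) (a : Pairs n → ℕ) {t₀ : Pairs n} {s : Vars p n}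
    (hs : lt h t₀ s ≠ 0) : Lexp h a s = a t₀ * lt h t₀ s := by
  rw [Lexp_apply]
  refine Finset.sum_eq_single t₀ (fun t _ htne => ?_) (by simp)
  by_cases hz : lt h t s = 0
  · rw [hz, mul_zero]
  · exact absurd (slot_unique h t t₀ s hz hs) htne

lemma Lexp_apply_zero (h : 2 * n < p) (a : Pairs n → ℕ) {s : Vars p n}
    (hs : ∀ t, lt h t s = 0) : Lexp h a s = 0 := by
  rw [Lexp_apply]
  exact Finset.sum_eq_zero fun t _ => by rw [hs t, mul_zero]

/-- extraction of the invariant part of an exponent. -/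
def aOf (h : 2 * n < p) (e : Exp p n) : Pairs n → ℕ := fun t =>
  if t.1.1 = t.1.2 then e (row h t.1.1 t.1.2, t.1.1) / 2
  else min (e (row h t.1.1 t.1.2, t.1.1)) (e (row h t.1.1 t.1.2, t.1.2))

lemma slot_cases' (h : 2 * n < p) {i j : Fin n} (hij : i ≤ j) (s : Vars p n)
    (hs : lt h ⟨(i, j), hij⟩ s ≠ 0) : s = (row h i j, i) ∨ s = (row h i j, j) :=
  slot_cases h _ s hs

lemma Lexp_s1 (h : 2 * n < p) {i j : Fin n} (hij : i ≤ j) (a : Pairs n → ℕ) :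
    Lexp h a (row h i j, i) = a ⟨(i, j), hij⟩ * (if i = j then 2 else 1) := by
  rw [Lexp_apply_of_ne h a (t₀ := ⟨(i, j), hij⟩)
    (by rw [lt_apply_1 h i j hij]; split <;> omega), lt_apply_1 h i j hij]

lemma Lexp_s2 (h : 2 * n < p) {i j : Fin n} (hij : i ≤ j) (a : Pairs n → ℕ) :
    Lexp h a (row h i j, j) = a ⟨(i, j), hij⟩ * (if i = j then 2 else 1) := by
  rw [Lexp_apply_of_ne h a (t₀ := ⟨(i, j), hij⟩)
    (by rw [lt_apply_2 h i j hij]; split <;> omega), lt_apply_2 h i j hij]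

lemma aOf_loop (h : 2 * n < p) {i j : Fin n} (hij : i ≤ j) (hl : i = j) (e : Exp p n) :
    aOf h e ⟨(i, j), hij⟩ = e (row h i j, i) / 2 := by
  simp only [aOf]
  rw [if_pos hl]

lemma aOf_nonloop (h : 2 * n < p) {i j : Fin n} (hij : i ≤ j) (hl : ¬ i = j) (e : Exp p n) :
    aOf h e ⟨(i, j), hij⟩ = min (e (row h i j, i)) (e (row h i j, j)) := by
  simp only [aOf]
  rw [if_neg hl]

lemma Lexp_le (h : 2 * n < p) (e : Exp p n) : Lexp h (aOf h e) ≤ e := by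
  rw [Finsupp.le_def]
  intro s
  by_cases hs : ∃ t₀, lt h t₀ s ≠ 0
  · obtain ⟨⟨⟨i, j⟩, hij⟩, ht₀⟩ := hs
    replace hij : i ≤ j := hij
    rcases slot_cases' h hij s ht₀ with rfl | rfl
    · rw [Lexp_s1 h hij]
      by_cases hl : i = j
      · rw [aOf_loop h hij hl, if_pos hl]; omega
      · rw [aOf_nonloop h hij hl, if_neg hl]; omega
    · rw [Lexp_s2 h hij]
      by_cases hl : i = j
      · rw [aOf_loop h hij hl, if_pos hl]
        subst hl
        omega
      · rw [aOf_nonloop h hij hl, if_neg hl]; omega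
  · push_neg at hs
    rw [Lexp_apply_zero h _ hs]
    exact Nat.zero_le _

lemma std_bOf (h : 2 * n < p) (e : Exp p n) : Std h (e - Lexp h (aOf h e)) := by
  rintro ⟨⟨i, j⟩, hij⟩ hle
  replace hij : i ≤ j := hij
  rw [Finsupp.le_def] at hle
  by_cases hl : i = j
  · have h1 := hle (row h i j, i)
    rw [lt_apply_1 h i j hij, if_pos hl, Finsupp.tsub_apply, Lexp_s1 h hij, if_pos hl,
      aOf_loop h hij hl] at h1
    omega
  · have h1 := hle (row h i j, i)
    have h2 := hle (row h i j, j)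
    rw [lt_apply_1 h i j hij, if_neg hl, Finsupp.tsub_apply, Lexp_s1 h hij, if_neg hl,
      aOf_nonloop h hij hl] at h1
    rw [lt_apply_2 h i j hij, if_neg hl, Finsupp.tsub_apply, Lexp_s2 h hij, if_neg hl,
      aOf_nonloop h hij hl] at h2
    omega

lemma std_slot_small (h : 2 * n < p) {b : Exp p n} (hb : Std h b) (t : Pairs n) :
    ∃ s, lt h t s ≠ 0 ∧ b s < lt h t s := by
  have := hb t
  rw [Finsupp.le_def] at this
  push_neg at this
  obtain ⟨s, hs⟩ := this
  exact ⟨s, by omega, hs⟩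

lemma aOf_eq (h : 2 * n < p) (a : Pairs n → ℕ) (b : Exp p n) (hb : Std h b) :
    aOf h (Lexp h a + b) = a := by
  funext t
  obtain ⟨⟨i, j⟩, hij⟩ := t
  replace hij : i ≤ j := hij
  obtain ⟨s, hs0, hslt⟩ := std_slot_small h hb ⟨(i, j), hij⟩
  by_cases hl : i = j
  · rw [aOf_loop h hij hl, Finsupp.add_apply, Lexp_s1 h hij, if_pos hl]
    rcases slot_cases' h hij s hs0 with rfl | rfl
    · rw [lt_apply_1 h i j hij, if_pos hl] at hslt
      omega
    · rw [lt_apply_2 h i j hij, if_pos hl] at hslt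
      subst hl
      omega
  · rw [aOf_nonloop h hij hl, Finsupp.add_apply, Finsupp.add_apply, Lexp_s1 h hij,
      Lexp_s2 h hij, if_neg hl]
    rcases slot_cases' h hij s hs0 with rfl | rfl
    · rw [lt_apply_1 h i j hij, if_neg hl] at hslt
      omega
    · rw [lt_apply_2 h i j hij, if_neg hl] at hslt
      omega

/-- The bijection between `(invariant part, standard part)` and exponents. -/
def ΦE (h : 2 * n < p) : Idx h ≃ Exp p n where
  toFun x := Lexp h x.1 + x.2.1
  invFun e := (aOf h e, ⟨e - Lexp h (aOf h e), std_bOf h e⟩)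
  left_inv x := by
    obtain ⟨a, b, hb⟩ := x
    have ha := aOf_eq h a b hb
    refine Prod.ext ha (Subtype.ext ?_)
    simp only [ha]
    exact add_tsub_cancel_left _ _
  right_inv e := add_tsub_cancel_of_le (Lexp_le h e)

lemma deg_lt (h : 2 * n < p) (t : Pairs n) : Finsupp.degree (lt h t) = 2 := deg_mu _ _ _

lemma deg_Lexp (h : 2 * n < p) (a : Pairs n → ℕ) :
    Finsupp.degree (Lexp h a) = 2 * asum a := by
  simp only [Finsupp.degree_eq_weight_one, Lexp, map_sum, map_nsmul]
  simp only [smul_eq_mul]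
  rw [asum, Finset.mul_sum]
  refine Finset.sum_congr rfl fun t _ => ?_
  have := deg_lt h t
  rw [Finsupp.degree_eq_weight_one] at this
  rw [this]
  ring

lemma deg_PhiE (h : 2 * n < p) (x : Idx h) :
    Finsupp.degree (ΦE h x) = degIdx h x := by
  obtain ⟨a, b, hb⟩ := x
  show Finsupp.degree (Lexp h a + b) = _
  rw [deg_add, deg_Lexp]; rfl


/-- the degree-`d` part of the candidate basis of `ℂ[x]` -/
def gens (h : 2 * n < p) (d : ℕ) : Set (Poly p n) := vI h '' {x : Idx h | degIdx h x = d}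

lemma X_mul_X (k : Fin p) (i j : Fin n) :
    (X (k, i) : Poly p n) * X (k, j) = monomial (mu k i j) 1 := by
  show monomial (Finsupp.single (k, i) 1) (1 : ℂ) * monomial (Finsupp.single (k, j) 1) 1 = _
  rw [monomial_mul, one_mul, mu]

lemma q_eq (i j : Fin n) : q p i j = ∑ k : Fin p, monomial (mu k i j) (1 : ℂ) :=
  Finset.sum_congr rfl fun k _ => X_mul_X k i j

lemma q_split (h : 2 * n < p) (i j : Fin n) (hij : i ≤ j) :
    q p i j = monomial (lt h ⟨(i, j), hij⟩) (1 : ℂ)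
      + ∑ k ∈ Finset.univ.erase (row h i j), monomial (mu k i j) 1 := by
  rw [q_eq, ← Finset.add_sum_erase _ _ (Finset.mem_univ (row h i j))]
  rfl

lemma Qpow_update (t₀ : Pairs n) (a : Pairs n → ℕ) :
    Qpow p (Function.update a t₀ (a t₀ + 1)) = q p t₀.1.1 t₀.1.2 * Qpow p a := by
  unfold Qpow
  have hfe : (fun t : Pairs n => q p t.1.1 t.1.2 ^ Function.update a t₀ (a t₀ + 1) t)
      = Function.update (fun t : Pairs n => q p t.1.1 t.1.2 ^ a t) t₀
        (q p t₀.1.1 t₀.1.2 ^ (a t₀ + 1)) := by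
    funext t
    by_cases ht : t = t₀
    · subst ht; simp [Function.update]
    · simp [Function.update, ht]
  rw [hfe, Finset.prod_update_of_mem (Finset.mem_univ t₀), ← Finset.erase_eq]
  have hmpe := Finset.mul_prod_erase Finset.univ
    (fun t : Pairs n => q p t.1.1 t.1.2 ^ a t) (Finset.mem_univ t₀)
  rw [← hmpe, pow_succ]
  ring

lemma asum_update (t₀ : Pairs n) (a : Pairs n → ℕ) :
    asum (Function.update a t₀ (a t₀ + 1)) = asum a + 1 := by
  unfold asum
  rw [Finset.sum_update_of_mem (Finset.mem_univ t₀), ← Finset.erase_eq,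
    ← Finset.add_sum_erase _ a (Finset.mem_univ t₀)]
  omega

lemma q_mul_gens (h : 2 * n < p) {i j : Fin n} (hij : i ≤ j) (d : ℕ) {x : Poly p n}
    (hx : x ∈ span ℂ (gens h d)) : q p i j * x ∈ span ℂ (gens h (d + 2)) := by
  have hmem : q p i j * x ∈ Submodule.map (LinearMap.mulLeft ℂ (q p i j)) (span ℂ (gens h d)) :=
    ⟨x, hx, rfl⟩
  rw [Submodule.map_span] at hmem
  refine span_le.mpr ?_ hmem
  rintro _ ⟨_, ⟨y, hy, rfl⟩, rfl⟩
  refine subset_span ⟨(Function.update y.1 ⟨(i, j), hij⟩ (y.1 ⟨(i, j), hij⟩ + 1), y.2), ?_, ?_⟩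
  · show 2 * asum _ + Finsupp.degree y.2.1 = d + 2
    rw [asum_update]
    have : 2 * asum y.1 + Finsupp.degree y.2.1 = d := hy
    omega
  · show Qpow p _ * monomial y.2.1 1 = q p i j * (Qpow p y.1 * monomial y.2.1 1)
    rw [Qpow_update, mul_assoc]

lemma monomial_mem_span (h : 2 * n < p) (e : Exp p n) :
    monomial e (1 : ℂ) ∈ span ℂ (gens h (Finsupp.degree e)) := by
  generalize hN : Finsupp.degree e + wt e = N
  induction N using Nat.strong_induction_on generalizing e with
  | _ N IH =>
  by_cases hstd : Std h e
  · refine subset_span ⟨(fun _ => 0, ⟨e, hstd⟩), ?_, ?_⟩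
    · show 2 * asum _ + Finsupp.degree e = Finsupp.degree e
      rw [asum, Finset.sum_const_zero]
      omega
    · show Qpow p _ * monomial e 1 = monomial e 1
      rw [Qpow, Finset.prod_eq_one (fun t _ => pow_zero _), one_mul]
  · rw [Std] at hstd
    push_neg at hstd
    obtain ⟨⟨⟨i, j⟩, hij⟩, hle⟩ := hstd
    replace hij : i ≤ j := hij
    set t : Pairs n := ⟨(i, j), hij⟩ with ht
    set e' := e - lt h t with he'
    have heq : e' + lt h t = e := tsub_add_cancel_of_le hle
    have hdeg : Finsupp.degree e = Finsupp.degree e' + 2 := by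
      rw [← heq, deg_add, deg_lt]
    have hwt : wt e = wt e' + wt (lt h t) := by rw [← heq, wt_add]
    -- decomposition of the monomial
    have hqm : q p i j * monomial e' (1 : ℂ)
        = monomial e 1 + ∑ k ∈ Finset.univ.erase (row h i j), monomial (e' + mu k i j) 1 := by
      rw [q_split h i j hij, add_mul, Finset.sum_mul, monomial_mul, one_mul]
      congr 1
      · rw [add_comm (lt h t) e', heq]
      · exact Finset.sum_congr rfl fun k _ => by rw [monomial_mul, one_mul, add_comm]
    have hIH1 : monomial e' (1 : ℂ) ∈ span ℂ (gens h (Finsupp.degree e')) := by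
      refine IH (Finsupp.degree e' + wt e') ?_ e' rfl
      have h2 : (2 : ℕ) ≤ 2 := le_refl _
      omega
    have hq : q p i j * monomial e' (1 : ℂ) ∈ span ℂ (gens h (Finsupp.degree e)) := by
      rw [hdeg]
      exact q_mul_gens h hij _ hIH1
    have hrest : ∑ k ∈ Finset.univ.erase (row h i j), monomial (e' + mu k i j) (1 : ℂ)
        ∈ span ℂ (gens h (Finsupp.degree e)) := by
      refine sum_mem fun k hk => ?_
      have hkne : k ≠ row h i j := (Finset.mem_erase.mp hk).1
      have hdegk : Finsupp.degree (e' + mu k i j) = Finsupp.degree e := by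
        rw [deg_add, deg_mu, hdeg]
      have hwtk : wt (e' + mu k i j) < wt e := by
        rw [wt_add, hwt]
        have := wt_mu_lt h hkne
        have hlt : wt (lt h t) = wt (mu (row h i j) i j) := rfl
        omega
      have := IH (Finsupp.degree (e' + mu k i j) + wt (e' + mu k i j))
        (by rw [hdegk]; omega) (e' + mu k i j) rfl
      rwa [hdegk] at this
    have : monomial e (1 : ℂ)
        = q p i j * monomial e' 1
          - ∑ k ∈ Finset.univ.erase (row h i j), monomial (e' + mu k i j) 1 := by
      rw [hqm]; ring
    rw [this]
    exact sub_mem hq hrest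


lemma q_isHom (i j : Fin n) : (q p i j).IsHomogeneous 2 := by
  refine IsHomogeneous.sum _ _ _ fun k _ => ?_
  simpa using (isHomogeneous_X ℂ (k, i)).mul (isHomogeneous_X ℂ (k, j))

lemma Qpow_isHom (a : Pairs n → ℕ) : (Qpow p (n := n) a).IsHomogeneous (2 * asum a) := by
  have := IsHomogeneous.prod Finset.univ
    (fun t : Pairs n => q p t.1.1 t.1.2 ^ a t) (fun t => 2 * a t)
    (fun t _ => by simpa [mul_comm] using (q_isHom t.1.1 t.1.2).pow (a t))
  have heq : ∑ t : Pairs n, 2 * a t = 2 * asum a := by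
    rw [asum, Finset.mul_sum]
  rw [heq] at this
  exact this

lemma vI_isHom (h : 2 * n < p) (x : Idx h) : (vI h x).IsHomogeneous (degIdx h x) :=
  (Qpow_isHom x.1).mul (isHomogeneous_monomial 1 rfl)

lemma hom_mem_monomial_span {f : Poly p n} {d : ℕ} (hf : f.IsHomogeneous d) :
    f ∈ span ℂ ((fun e : Exp p n => monomial e (1 : ℂ)) '' {e | Finsupp.degree e = d}) := by
  rw [f.as_sum]
  refine sum_mem fun v hv => ?_
  have hdeg : Finsupp.degree v = d := by
    by_contra hc
    exact (MvPolynomial.mem_support_iff.mp hv) (hf.coeff_eq_zero hc)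
  have : monomial v (coeff v f) = coeff v f • monomial v (1 : ℂ) := by
    rw [smul_monomial, smul_eq_mul, mul_one]
  rw [this]
  exact smul_mem _ _ (subset_span ⟨v, hdeg, rfl⟩)

lemma finite_expD (d : ℕ) : {e : Exp p n | Finsupp.degree e = d}.Finite :=
  (Finsupp.finite_of_degree_le d).subset fun _ he => le_of_eq he

lemma span_gens_eq (h : 2 * n < p) (d : ℕ) :
    span ℂ (gens h d)
      = span ℂ ((fun e : Exp p n => monomial e (1 : ℂ)) '' {e | Finsupp.degree e = d}) := by
  refine le_antisymm (span_le.mpr ?_) (span_le.mpr ?_)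
  · rintro _ ⟨x, hx, rfl⟩
    exact hom_mem_monomial_span (hx ▸ vI_isHom h x)
  · rintro _ ⟨e, he, rfl⟩
    have := monomial_mem_span h e
    rw [he] at this
    exact this

lemma indep_d (h : 2 * n < p) (d : ℕ) :
    LinearIndependent ℂ (fun x : {x : Idx h // degIdx h x = d} => vI h x.1) := by
  haveI hfinE : Finite {e : Exp p n // Finsupp.degree e = d} := (finite_expD d).to_subtype
  let eq1 : {x : Idx h // degIdx h x = d} ≃ {e : Exp p n // Finsupp.degree e = d} :=
    (ΦE h).subtypeEquiv (fun x => by rw [show Finsupp.degree (ΦE h x) = degIdx h x from deg_PhiE h x])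
  haveI : Finite {x : Idx h // degIdx h x = d} := Finite.of_equiv _ eq1.symm
  haveI : Fintype {x : Idx h // degIdx h x = d} := Fintype.ofFinite _
  haveI : Fintype {e : Exp p n // Finsupp.degree e = d} := Fintype.ofFinite _
  rw [linearIndependent_iff_card_eq_finrank_span]
  have hmono : LinearIndependent ℂ
      (fun e : {e : Exp p n // Finsupp.degree e = d} => monomial e.1 (1 : ℂ)) := by
    have hb := (basisMonomials (Vars p n) ℂ).linearIndependent
    rw [coe_basisMonomials] at hb
    exact hb.comp Subtype.val Subtype.val_injective
  have hrange1 : Set.range (fun x : {x : Idx h // degIdx h x = d} => vI h x.1) = gens h d := by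
    rw [gens, Set.image_eq_range]
    rfl
  have hrange2 : Set.range (fun e : {e : Exp p n // Finsupp.degree e = d} => monomial e.1 (1 : ℂ))
      = (fun e : Exp p n => monomial e (1 : ℂ)) '' {e | Finsupp.degree e = d} := by
    rw [Set.image_eq_range]
    rfl
  have hkey : Set.finrank ℂ (Set.range fun x : {x : Idx h // degIdx h x = d} => vI h x.1)
      = Fintype.card {e : Exp p n // Finsupp.degree e = d} := by
    rw [← finrank_span_eq_card hmono]
    unfold Set.finrank
    rw [hrange1, span_gens_eq h d, hrange2]
  rw [hkey]
  exact Fintype.card_congr eq1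

lemma indep_global (h : 2 * n < p) : LinearIndependent ℂ (vI h) := by
  classical
  rw [linearIndependent_iff']
  intro s g hsum x hx
  set d := degIdx h x with hd
  have hproj : ∑ y ∈ s.filter (fun y => d = degIdx h y), g y • vI h y = 0 := by
    have hc := congrArg (homogeneousComponent (σ := Vars p n) (R := ℂ) d) hsum
    rw [map_sum, map_zero] at hc
    have hterm : ∑ y ∈ s, (if d = degIdx h y then g y • vI h y else 0)
        = ∑ y ∈ s, homogeneousComponent d (g y • vI h y) := by
      refine Finset.sum_congr rfl fun y _ => ?_
      rw [map_smul,
        homogeneousComponent_of_mem ((mem_homogeneousSubmodule _ _).mpr (vI_isHom h y)),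
        smul_ite, smul_zero]
    rw [Finset.sum_filter, hterm, hc]
  have hsum2 : ∑ y ∈ (s.filter (fun y => d = degIdx h y)).attach, g y.1 • vI h y.1 = 0 := by
    rw [Finset.sum_attach (s.filter (fun y => d = degIdx h y)) (fun y => g y • vI h y)]
    exact hproj
  let emb : {y // y ∈ s.filter (fun y => d = degIdx h y)} → {x : Idx h // degIdx h x = d} :=
    fun y => ⟨y.1, ((Finset.mem_filter.mp y.2).2).symm⟩
  have hembinj : Function.Injective emb := by
    intro a b hab
    have hv : (emb a).1 = (emb b).1 := congrArg Subtype.val hab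
    exact Subtype.ext hv
  have hfin := linearIndependent_iff'.mp (indep_d h d)
    (((s.filter (fun y => d = degIdx h y)).attach).image emb) (fun z => g z.1)
    (by rw [Finset.sum_image (fun a _ b _ hab => hembinj hab)]; exact hsum2)
    ⟨x, hd.symm⟩
    (Finset.mem_image.mpr ⟨⟨x, Finset.mem_filter.mpr ⟨hx, hd⟩⟩, Finset.mem_attach _ _, rfl⟩)
  exact hfin


lemma q_mem (i j : Fin n) (hij : i ≤ j) : q p i j ∈ quadInvariantsO p n :=
  Algebra.subset_adjoin ⟨i, j, hij, rfl⟩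

lemma Qpow_mem (a : Pairs n → ℕ) : Qpow p a ∈ quadInvariantsO p n :=
  prod_mem fun t _ => pow_mem (q_mem t.1.1 t.1.2 t.2) _

lemma Qpow_zero : Qpow p (n := n) (fun _ => 0) = 1 :=
  Finset.prod_eq_one fun t _ => pow_zero _

lemma Qpow_add (a b : Pairs n → ℕ) :
    Qpow p (n := n) (fun t => a t + b t) = Qpow p a * Qpow p b := by
  unfold Qpow
  rw [← Finset.prod_mul_distrib]
  exact Finset.prod_congr rfl fun t _ => pow_add _ _ _

lemma adjoin_le_span {s : Poly p n} (hs : s ∈ quadInvariantsO p n) :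
    s ∈ span ℂ (Set.range (Qpow p (n := n))) := by
  classical
  induction hs using Algebra.adjoin_induction with
  | mem x hx =>
    obtain ⟨i, j, hij, rfl⟩ := hx
    refine subset_span ⟨fun t => if t = ⟨(i, j), hij⟩ then 1 else 0, ?_⟩
    have hcongr : ∀ t : Pairs n,
        q p t.1.1 t.1.2 ^ (if t = (⟨(i, j), hij⟩ : Pairs n) then 1 else 0)
          = (if t = (⟨(i, j), hij⟩ : Pairs n) then q p t.1.1 t.1.2 else 1) := fun t => by
      split_ifs <;> simp
    rw [Qpow, Finset.prod_congr rfl fun t _ => hcongr t]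
    have := Finset.prod_ite_eq' Finset.univ (⟨(i, j), hij⟩ : Pairs n)
      (fun t : Pairs n => q p t.1.1 t.1.2)
    rw [this, if_pos (Finset.mem_univ _)]
    rfl
  | algebraMap r =>
    rw [Algebra.algebraMap_eq_smul_one, ← Qpow_zero (p := p) (n := n)]
    exact smul_mem _ _ (subset_span ⟨fun _ => 0, rfl⟩)
  | add x y hx hy ihx ihy => exact add_mem ihx ihy
  | mul x y hx hy ihx ihy =>
    have hmul := Submodule.mul_mem_mul ihx ihy
    rw [Submodule.span_mul_span] at hmul
    refine span_le.mpr ?_ hmul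
    rintro _ ⟨_, ⟨a, rfl⟩, _, ⟨b, rfl⟩, rfl⟩
    exact subset_span ⟨fun t => a t + b t, Qpow_add a b⟩

lemma exists_repr {s : Poly p n} (hs : s ∈ quadInvariantsO p n) :
    ∃ c : (Pairs n → ℕ) →₀ ℂ, (c.sum fun a r => r • Qpow p a) = s :=
  Finsupp.mem_span_range_iff_exists_finsupp.mp (adjoin_le_span hs)

lemma smul_sub_def (x : quadInvariantsO p n) (y : Poly p n) : x • y = (x : Poly p n) * y :=
  Algebra.smul_def x y

lemma monomial_mem_spanS (h : 2 * n < p) (e : Exp p n) :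
    monomial e (1 : ℂ) ∈ span (quadInvariantsO p n)
      (Set.range fun b : {e : Exp p n // Std h e} => (monomial b.1 (1 : ℂ) : Poly p n)) := by
  have h1 := monomial_mem_span h e
  have h2 : span ℂ (gens h (Finsupp.degree e))
      ≤ (span (quadInvariantsO p n)
          (Set.range fun b : {e : Exp p n // Std h e} =>
            (monomial b.1 (1 : ℂ) : Poly p n))).restrictScalars ℂ := by
    refine span_le.mpr ?_
    rintro _ ⟨⟨a, b⟩, _, rfl⟩
    rw [SetLike.mem_coe, Submodule.restrictScalars_mem]
    have : vI h (a, b) = (⟨Qpow p a, Qpow_mem a⟩ : quadInvariantsO p n) • monomial b.1 (1 : ℂ) := by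
      rw [smul_sub_def]
      rfl
    rw [this]
    exact smul_mem _ _ (subset_span ⟨b, rfl⟩)
  exact (Submodule.restrictScalars_mem _ _ _).mp (h2 h1)

lemma top_le_spanS (h : 2 * n < p) :
    ⊤ ≤ span (quadInvariantsO p n)
      (Set.range fun b : {e : Exp p n // Std h e} => (monomial b.1 (1 : ℂ) : Poly p n)) := by
  intro f _
  rw [f.as_sum]
  refine sum_mem fun v _ => ?_
  have : (monomial v (coeff v f) : Poly p n)
      = (⟨algebraMap ℂ (Poly p n) (coeff v f), (quadInvariantsO p n).algebraMap_mem _⟩ :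
          quadInvariantsO p n) • monomial v (1 : ℂ) := by
    rw [smul_sub_def]
    show monomial v (coeff v f) = C (coeff v f) * monomial v 1
    rw [C_mul_monomial, mul_one]
  rw [this]
  exact smul_mem _ _ (monomial_mem_spanS h v)

lemma indepS (h : 2 * n < p) :
    LinearIndependent (quadInvariantsO p n)
      (fun b : {e : Exp p n // Std h e} => (monomial b.1 (1 : ℂ) : Poly p n)) := by
  classical
  rw [linearIndependent_iff']
  intro s g hsum b hb
  have hrep : ∀ b' : {e : Exp p n // Std h e},
      ∃ c : (Pairs n → ℕ) →₀ ℂ, (c.sum fun a r => r • Qpow p a) = (g b' : Poly p n) :=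
    fun b' => exists_repr (g b').2
  choose c hc using hrep
  haveI : DecidableEq (Idx h) := Classical.decEq _
  have hsum2 : ∑ b' ∈ s, ∑ a ∈ (c b').support, c b' a • vI h (a, b') = 0 := by
    rw [← hsum]
    refine Finset.sum_congr rfl fun b' _ => ?_
    rw [smul_sub_def, ← hc b', Finsupp.sum, Finset.sum_mul]
    exact Finset.sum_congr rfl fun a _ => by rw [smul_mul_assoc]; rfl
  let emb : {e : Exp p n // Std h e} → ((Pairs n → ℕ) ↪ Idx h) := fun b' =>
    ⟨fun a => (a, b'), fun a₁ a₂ hcc => congrArg Prod.fst hcc⟩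
  let F : Finset (Idx h) := s.biUnion (fun b' => (c b').support.map (emb b'))
  have hGsum : ∑ x ∈ F, c x.2 x.1 • vI h x = 0 := by
    rw [Finset.sum_biUnion]
    · rw [← hsum2]
      refine Finset.sum_congr rfl fun b' _ => ?_
      rw [Finset.sum_map]
      rfl
    · intro u hu v hv huv
      refine Finset.disjoint_left.mpr fun x hxu hxv => ?_
      obtain ⟨a1, _, rfl⟩ := Finset.mem_map.mp hxu
      obtain ⟨a2, _, hx2⟩ := Finset.mem_map.mp hxv
      exact huv ((congrArg Prod.snd hx2).symm)
  have hzero := linearIndependent_iff'.mp (indep_global h) F (fun x => c x.2 x.1) hGsum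
  have hgb : (g b : Poly p n) = 0 := by
    rw [← hc b, Finsupp.sum]
    refine Finset.sum_eq_zero fun a ha => ?_
    have hmem : ((a, b) : Idx h) ∈ F :=
      (Finset.mem_biUnion (β := Idx h) (s := s) (t := fun b' => (c b').support.map (emb b'))).mpr
        ⟨b, hb, Finset.mem_map.mpr ⟨a, ha, rfl⟩⟩
    have hz' : c b a = 0 := hzero (a, b) hmem
    rw [hz', zero_smul]
  exact Subtype.ext hgb

end Lemmas
end SepVar
end

/-- Separation of variables for the dual pair `(O(p,q), Sp(2n,ℝ))` in the stable
range `2n < p`: the polynomial ring `ℂ[M_{p,n}(ℂ)]` is a free module over the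
subalgebra generated by the quadratic invariants `q_{i,j}`; in particular it is
flat, i.e. the moment map `ψ⁺(A) = AᵀA` is flat. -/
theorem polynomialRing_free_over_invariants (p n : ℕ) (hp : 0 < p) (hn : 0 < n)
    (h : 2 * n < p) :
    Module.Free (quadInvariantsO p n) (MvPolynomial (Fin p × Fin n) ℂ) :=
  Module.Free.of_basis (Module.Basis.mk (SepVar.indepS h) (SepVar.top_le_spanS h))
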